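/- Let A be an n×n circulant matrix over a finite field F. Then A is semi-orthogonal if and only if there exist non-singular diagonal matrices D₁ and D₂ over F such that D₁ⁿ = k₁·I and D₂ⁿ = k₂·I for some non-zero scalars k₁, k₂ ∈ F, and (A⁻¹)ᵀ = D₁·A·D₂. -/

import Mathlib

open Matrix

/-- The `n × n` circulant matrix with first row `c₀, c₁, …, c_{n-1}`, i.e. the matrix whose
`(i,j)` entry is `c_{(j - i) mod n}`. -/
def circulantM {n : ℕ} {F : Type*} (c : Fin n → F) : Matrix (Fin n) (Fin n) F :=
  Matrix.of fun i j => c (j - i)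

open Fin.CommRing Fin.NatCast

/-- Let `A` be an `n × n` circulant matrix over a finite field `F`. Then `A` is
semi-orthogonal (i.e. `A` is non-singular and there exist non-singular diagonal matrices
`D₁, D₂` with `(A⁻¹)ᵀ = D₁ * A * D₂`) if and only if there exist non-singular diagonal
matrices `D₁, D₂` such that `D₁ ^ n = k₁ • I` and `D₂ ^ n = k₂ • I` for some non-zero scalars
`k₁, k₂ ∈ F`, and `(A⁻¹)ᵀ = D₁ * A * D₂`. -/
theorem circulant_semiOrthogonal_iff {n : ℕ} {F : Type*} [Field F] [Fintype F]
    (c : Fin n → F) (A : Matrix (Fin n) (Fin n) F) (hA : A = circulantM c) :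
    (A.det ≠ 0 ∧ ∃ D₁ D₂ : Matrix (Fin n) (Fin n) F,
        D₁.IsDiag ∧ D₂.IsDiag ∧ D₁.det ≠ 0 ∧ D₂.det ≠ 0 ∧ (A⁻¹)ᵀ = D₁ * A * D₂) ↔
    (A.det ≠ 0 ∧ ∃ (D₁ D₂ : Matrix (Fin n) (Fin n) F) (k₁ k₂ : F),
        D₁.IsDiag ∧ D₂.IsDiag ∧ D₁.det ≠ 0 ∧ D₂.det ≠ 0 ∧ k₁ ≠ 0 ∧ k₂ ≠ 0 ∧
        D₁ ^ n = k₁ • (1 : Matrix (Fin n) (Fin n) F) ∧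
        D₂ ^ n = k₂ • (1 : Matrix (Fin n) (Fin n) F) ∧
        (A⁻¹)ᵀ = D₁ * A * D₂) := by
  classical
  constructor
  · rintro ⟨hdet, D₁, D₂, hD₁, hD₂, hd₁det, hd₂det, hB⟩
    refine ⟨hdet, ?_⟩
    rcases Nat.eq_zero_or_pos n with hn | hn
    · subst hn
      refine ⟨1, 1, 1, 1, Matrix.isDiag_one, Matrix.isDiag_one, by simp, by simp,
        one_ne_zero, one_ne_zero, by simp, by simp, ?_⟩
      ext i j; exact i.elim0
    haveI : NeZero n := ⟨hn.ne'⟩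
    haveI : Nonempty (Fin n) := Fin.pos_iff_nonempty.mp hn
    -- diagonal entries
    set d₁ : Fin n → F := D₁.diag with hd₁def
    set d₂ : Fin n → F := D₂.diag with hd₂def
    have hD₁e : D₁ = Matrix.diagonal d₁ := (hD₁.diagonal_diag).symm
    have hD₂e : D₂ = Matrix.diagonal d₂ := (hD₂.diagonal_diag).symm
    have hd1 : ∀ i, d₁ i ≠ 0 := by
      intro i
      rw [hD₁e, Matrix.det_diagonal] at hd₁det
      exact fun h => hd₁det (Finset.prod_eq_zero (Finset.mem_univ i) h)
    have hd2 : ∀ i, d₂ i ≠ 0 := by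
      intro i
      rw [hD₂e, Matrix.det_diagonal] at hd₂det
      exact fun h => hd₂det (Finset.prod_eq_zero (Finset.mem_univ i) h)
    -- entrywise form of the semi-orthogonality relation
    have hEntry : ∀ i j, (A⁻¹)ᵀ i j = d₁ i * A i j * d₂ j := by
      intro i j
      rw [hB, hD₁e, hD₂e, Matrix.mul_diagonal, Matrix.diagonal_mul]
    -- shift invariance of A and of A⁻¹
    have hAc : ∀ i j, A i j = c (j - i) := by intro i j; rw [hA]; rfl
    have hAs : ∀ i j, A (i + 1) (j + 1) = A i j := by
      intro i j
      rw [hAc, hAc]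
      congr 1
      ring
    set e : Fin n ≃ Fin n := Equiv.addRight (1 : Fin n) with he
    have hAe : A.submatrix e e = A := by
      ext i j
      simp only [Matrix.submatrix_apply, he, Equiv.coe_addRight]
      exact hAs i j
    have hAinv : A * A⁻¹ = 1 := Matrix.mul_nonsing_inv A (isUnit_iff_ne_zero.mpr hdet)
    have hinvE : A⁻¹.submatrix e e = A⁻¹ := by
      apply (Matrix.inv_eq_right_inv ?_).symm
      calc A * A⁻¹.submatrix e e = A.submatrix e e * A⁻¹.submatrix e e := by rw [hAe]
        _ = (A * A⁻¹).submatrix e e := Matrix.submatrix_mul_equiv A A⁻¹ e e e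
        _ = (1 : Matrix (Fin n) (Fin n) F).submatrix e e := by rw [hAinv]
        _ = 1 := Matrix.submatrix_one_equiv e
    have hBs : ∀ i j, (A⁻¹)ᵀ (i + 1) (j + 1) = (A⁻¹)ᵀ i j := by
      intro i j
      have := congrFun (congrFun hinvE j) i
      simpa [Matrix.transpose_apply, he] using this
    -- support of c is nonempty
    have hs₀ : ∃ s, c s ≠ 0 := by
      by_contra h
      push_neg at h
      apply hdet
      have : A = 0 := by
        ext i j; rw [hAc, h]; rfl
      rw [this, Matrix.det_zero]
    obtain ⟨s₀, hcs₀⟩ := hs₀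
    -- the key relation: d₁ i * d₂ j is constant along the support
    have hstep : ∀ (i s : Fin n), c s ≠ 0 →
        d₁ (i + 1) * d₂ (i + s + 1) = d₁ i * d₂ (i + s) := by
      intro i s hs
      have h1 := hEntry (i + 1) (i + s + 1)
      have h2 := hEntry i (i + s)
      rw [hBs i (i + s)] at h1
      rw [h2] at h1
      have hAv : A (i + 1) (i + s + 1) = c s := by rw [hAc]; congr 1; ring
      have hAv2 : A i (i + s) = c s := by rw [hAc]; congr 1; ring
      rw [hAv, hAv2] at h1
      apply mul_left_cancel₀ hs
      linear_combination -h1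
    have haux : ∀ (k : ℕ) (s : Fin n), c s ≠ 0 → ∀ i : Fin n,
        d₁ (i + (k : Fin n)) * d₂ (i + (k : Fin n) + s) = d₁ i * d₂ (i + s) := by
      intro k
      induction k with
      | zero => intro s hs i; simp
      | succ k ih =>
        intro s hs i
        have e1 : ((k + 1 : ℕ) : Fin n) = (k : Fin n) + 1 := by push_cast; ring
        have e2 : i + ((k : Fin n) + 1) = (i + (k : Fin n)) + 1 := by ring
        have e3 : (i + (k : Fin n)) + 1 + s = ((i + (k : Fin n)) + s) + 1 := by ring
        rw [e1, e2, e3, hstep (i + (k : Fin n)) s hs]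
        exact ih s hs i
    have hconst : ∀ s, c s ≠ 0 → ∀ i, d₁ i * d₂ (i + s) = d₁ 0 * d₂ s := by
      intro s hs i
      have := haux i.val s hs 0
      simpa [Fin.cast_val_eq_self] using this
    have hr0 : ∀ s, c s ≠ 0 → d₁ 0 * d₂ s ≠ 0 := fun s _ => mul_ne_zero (hd1 0) (hd2 s)
    have hE : ∀ s t j, c s ≠ 0 → c t ≠ 0 →
        d₁ (j - s) * (d₁ 0 * d₂ t) = d₁ (j - t) * (d₁ 0 * d₂ s) := by
      intro s t j hs ht
      have h1 := hconst s hs (j - s)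
      have h2 := hconst t ht (j - t)
      rw [sub_add_cancel] at h1 h2
      linear_combination d₁ (j - t) * h1 - d₁ (j - s) * h2
    -- n-th powers of the constants agree
    have hq : ∀ s t, c s ≠ 0 → c t ≠ 0 → (d₁ 0 * d₂ s) ^ n = (d₁ 0 * d₂ t) ^ n := by
      intro s t hs ht
      set rs := d₁ 0 * d₂ s with hrs
      set rt := d₁ 0 * d₂ t with hrt
      set u := t - s with hu
      have hC : ∀ i, d₁ (i + u) * rt = d₁ i * rs := by
        intro i
        have h := hE s t (i + t) hs ht
        have e1 : i + t - s = i + u := by rw [hu]; ring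
        have e2 : i + t - t = i := by ring
        rw [e1, e2] at h
        exact h
      have haux2 : ∀ (k : ℕ) (i : Fin n), d₁ (i + k • u) * rt ^ k = d₁ i * rs ^ k := by
        intro k
        induction k with
        | zero => intro i; simp
        | succ k ih =>
          intro i
          have e1 : i + (k + 1) • u = (i + u) + k • u := by rw [succ_nsmul]; abel
          rw [e1]
          have ihh := ih (i + u)
          have hc := hC i
          linear_combination rt * ihh + rs ^ k * hc
      have hnu : n • u = 0 := by rw [nsmul_eq_mul, Fin.natCast_self, zero_mul]
      have h := haux2 n 0
      rw [hnu, add_zero] at h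
      exact (mul_left_cancel₀ (hd1 0) h).symm
    have hKEY : ∀ s t j, c s ≠ 0 → c t ≠ 0 → d₁ (j - s) ^ n = d₁ (j - t) ^ n := by
      intro s t j hs ht
      have h : d₁ (j - s) ^ n * (d₁ 0 * d₂ t) ^ n = d₁ (j - t) ^ n * (d₁ 0 * d₂ s) ^ n := by
        rw [← mul_pow, ← mul_pow, hE s t j hs ht]
      rw [hq t s ht hs] at h
      exact mul_right_cancel₀ (pow_ne_zero n (hr0 s hs)) h
    -- choose n-th roots
    set ρ : F → F := fun x => if h : ∃ y : F, y ^ n = x then h.choose else 1 with hρdef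
    have hρ : ∀ (x : F), (∃ y : F, y ^ n = x) → ρ x ^ n = x := by
      intro x h
      rw [hρdef]
      simp only [dif_pos h]
      exact h.choose_spec
    have hρd : ∀ i, ρ (d₁ i ^ n) ^ n = d₁ i ^ n := fun i => hρ _ ⟨d₁ i, rfl⟩
    have hρne : ∀ i, ρ (d₁ i ^ n) ≠ 0 := by
      intro i h
      have := hρd i
      rw [h, zero_pow hn.ne'] at this
      exact pow_ne_zero n (hd1 i) this.symm
    set d₁' : Fin n → F := fun i => d₁ i * (ρ (d₁ i ^ n))⁻¹ with hd₁'
    set d₂' : Fin n → F := fun j => d₂ j * ρ (d₁ (j - s₀) ^ n) with hd₂'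
    have hd1' : ∀ i, d₁' i ≠ 0 := fun i => mul_ne_zero (hd1 i) (inv_ne_zero (hρne i))
    have hd2' : ∀ j, d₂' j ≠ 0 := fun j => mul_ne_zero (hd2 j) (hρne _)
    refine ⟨Matrix.diagonal d₁', Matrix.diagonal d₂', 1, (d₁ 0 * d₂ s₀) ^ n,
      Matrix.isDiag_diagonal d₁', Matrix.isDiag_diagonal d₂', ?_, ?_, one_ne_zero,
      pow_ne_zero n (hr0 s₀ hcs₀), ?_, ?_, ?_⟩
    · rw [Matrix.det_diagonal]
      exact Finset.prod_ne_zero_iff.mpr fun i _ => hd1' i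
    · rw [Matrix.det_diagonal]
      exact Finset.prod_ne_zero_iff.mpr fun j _ => hd2' j
    · have hfun : d₁' ^ n = fun _ => (1 : F) := by
        funext i
        simp only [Pi.pow_apply]
        have : d₁' i = d₁ i * (ρ (d₁ i ^ n))⁻¹ := rfl
        rw [this, mul_pow, inv_pow, hρd i]
        exact mul_inv_cancel₀ (pow_ne_zero n (hd1 i))
      rw [Matrix.diagonal_pow, hfun, Matrix.smul_one_eq_diagonal]
    · have hfun : d₂' ^ n = fun _ => (d₁ 0 * d₂ s₀) ^ n := by
        funext j
        simp only [Pi.pow_apply]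
        have h1 := hconst s₀ hcs₀ (j - s₀)
        rw [sub_add_cancel] at h1
        have he2 : d₂' j = d₂ j * ρ (d₁ (j - s₀) ^ n) := rfl
        rw [he2, mul_pow, hρd (j - s₀), ← mul_pow, mul_comm (d₂ j), h1]
      rw [Matrix.diagonal_pow, hfun, Matrix.smul_one_eq_diagonal]
    · ext i j
      rw [Matrix.mul_diagonal, Matrix.diagonal_mul, hEntry i j]
      by_cases hc : c (j - i) = 0
      · rw [hAc i j, hc]; ring
      · have hx : d₁ i ^ n = d₁ (j - s₀) ^ n := by
          have h := hKEY (j - i) s₀ j hc hcs₀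
          have e1 : j - (j - i) = i := by ring
          rw [e1] at h
          exact h
        have e1' : d₁' i = d₁ i * (ρ (d₁ i ^ n))⁻¹ := rfl
        have e2' : d₂' j = d₂ j * ρ (d₁ (j - s₀) ^ n) := rfl
        rw [e1', e2', hx]
        have hcan := mul_inv_cancel₀ (hρne (j - s₀))
        linear_combination (-(d₁ i * A i j * d₂ j)) * hcan
  · rintro ⟨hdet, D₁, D₂, k₁, k₂, hD₁, hD₂, hd₁det, hd₂det, _, _, _, _, hB⟩
    exact ⟨hdet, D₁, D₂, hD₁, hD₂, hd₁det, hd₂det, hB⟩
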